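/- Let Δ : 2^{C([n],r)} → 2^{C([n],r)} be the compression operator taking a family G ⊆ C([n],r) to the initial segment of length |G| of the colexicographic order on C([n],r). For F ⊆ C([n],r)^d, writing F = ⋃_{S ∈ C([n],r)^{d−1}} {S} × F_S where F_S is the section of F in the last coordinate determined by S, define F' = ⋃_{S ∈ C([n],r)^{d−1}} {S} × Δ(F_S). Then |F'| = |F| and |∂F'| ≤ |∂F|. -/

import Mathlib

open Finset

/-- The shadow of a `d`-dimensional uniform family: all tuples obtained from a tuple in `F`
by removing one element from each coordinate. -/
def multiShadow {α : Type*} [DecidableEq α] (d : ℕ) (F : Set (Fin d → Finset α)) :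
    Set (Fin d → Finset α) :=
  {T | ∃ S ∈ F, ∃ x : Fin d → α, (∀ i, x i ∈ S i) ∧ ∀ i, T i = (S i).erase (x i)}

/-- `C([n], r)`: the `r`-element subsets of `[n] = {1, …, n}`. -/
def uniformOn (n r : ℕ) : Set (Finset ℕ) := {A | A ⊆ Finset.Icc 1 n ∧ A.card = r}

/-- The position (starting from 1) of `B` in the colexicographic order on `C([n], r)`. -/
noncomputable def colexRank (n r : ℕ) (B : Finset ℕ) : ℕ :=
  Set.ncard {A | A ∈ uniformOn n r ∧ toColex A ≤ toColex B}

/-- The compression operator `Δ`: it sends `G ⊆ C([n], r)` to the initial segment of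
length `|G|` of the colexicographic order on `C([n], r)`. -/
noncomputable def compress (n r : ℕ) (G : Set (Finset ℕ)) : Set (Finset ℕ) :=
  {B | B ∈ uniformOn n r ∧ colexRank n r B ≤ G.ncard}

/-- `F' = ⋃_{S ∈ C([n],r)^d} {S} × Δ(F_S)`, where the section is taken in the last
coordinate. -/
noncomputable def compressLast (n r d : ℕ) (F : Set (Fin (d + 1) → Finset ℕ)) :
    Set (Fin (d + 1) → Finset ℕ) :=
  {T | T (Fin.last d) ∈ compress n r {A | Fin.snoc (Fin.init T) A ∈ F}}

namespace KKAux

variable {n r d : ℕ}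

/-- The ground family as a finset. -/
noncomputable def grd (n r : ℕ) : Finset (Finset ℕ) := (Finset.Icc 1 n).powersetCard r

lemma uniformOn_eq_coe (n r : ℕ) : uniformOn n r = ↑(grd n r) := by
  ext A; simp [uniformOn, grd, Finset.mem_powersetCard]

lemma mem_grd {A : Finset ℕ} : A ∈ grd n r ↔ A ∈ uniformOn n r := by
  rw [uniformOn_eq_coe]; simp

lemma mem_grd' {A : Finset ℕ} : A ∈ grd n r ↔ A ⊆ Finset.Icc 1 n ∧ #A = r :=
  Finset.mem_powersetCard

lemma colexRank_eq (n r : ℕ) (B : Finset ℕ) :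
    colexRank n r B
      = #((grd n r).filter fun A => toColex A ≤ toColex B) := by
  rw [colexRank, ← Set.ncard_coe_finset]
  congr 1
  ext A
  simp [Finset.coe_filter, mem_grd]

lemma colexRank_mono {B C : Finset ℕ} (h : toColex B ≤ toColex C) :
    colexRank n r B ≤ colexRank n r C := by
  rw [colexRank_eq, colexRank_eq]
  apply Finset.card_le_card
  intro A hA
  rw [Finset.mem_filter] at hA ⊢
  exact ⟨hA.1, hA.2.trans h⟩

lemma one_le_colexRank {B : Finset ℕ} (hB : B ∈ grd n r) : 1 ≤ colexRank n r B := by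
  rw [colexRank_eq]
  exact Finset.card_pos.2 ⟨B, Finset.mem_filter.2 ⟨hB, le_rfl⟩⟩

lemma colexRank_strict {B C : Finset ℕ} (hC : C ∈ grd n r)
    (h : toColex B < toColex C) : colexRank n r B < colexRank n r C := by
  rw [colexRank_eq, colexRank_eq]
  apply Finset.card_lt_card
  refine ⟨?_, fun hsub => ?_⟩
  · intro A hA
    rw [Finset.mem_filter] at hA ⊢
    exact ⟨hA.1, hA.2.trans h.le⟩
  · have := hsub (Finset.mem_filter.2 ⟨hC, le_rfl⟩)
    exact absurd (Finset.mem_filter.1 this).2 (not_le.2 h)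

lemma colexRank_injOn : Set.InjOn (colexRank n r) ↑(grd n r) := by
  intro B hB C hC hBC
  rcases lt_trichotomy (toColex B) (toColex C) with h | h | h
  · exact absurd hBC (colexRank_strict (by simpa using hC) h).ne
  · exact toColex_inj.1 h
  · exact absurd hBC.symm (colexRank_strict (by simpa using hB) h).ne

lemma card_rank_le (n r m : ℕ) :
    #((grd n r).filter fun B => colexRank n r B ≤ m) = min m #(grd n r) := by
  have himg : (grd n r).image (colexRank n r) = Finset.Icc 1 #(grd n r) := by
    apply Finset.eq_of_subset_of_card_le
    · intro x hx
      obtain ⟨B, hB, rfl⟩ := Finset.mem_image.1 hx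
      rw [Finset.mem_Icc]
      refine ⟨one_le_colexRank hB, ?_⟩
      rw [colexRank_eq]
      exact Finset.card_le_card (Finset.filter_subset _ _)
    · rw [Finset.card_image_of_injOn colexRank_injOn, Nat.card_Icc]
      omega
  have h2 : ((grd n r).filter fun B => colexRank n r B ≤ m).image (colexRank n r)
      = (Finset.Icc 1 #(grd n r)).filter (· ≤ m) := by
    ext x
    simp only [Finset.mem_image, Finset.mem_filter]
    constructor
    · rintro ⟨B, hB, rfl⟩
      refine ⟨?_, hB.2⟩
      rw [← himg]
      exact Finset.mem_image_of_mem _ hB.1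
    · rintro ⟨hx, hxm⟩
      rw [← himg] at hx
      obtain ⟨B, hB, rfl⟩ := Finset.mem_image.1 hx
      exact ⟨B, ⟨hB, hxm⟩, rfl⟩
  have h3 : #((grd n r).filter fun B => colexRank n r B ≤ m)
      = #(((grd n r).filter fun B => colexRank n r B ≤ m).image (colexRank n r)) :=
    (Finset.card_image_of_injOn (colexRank_injOn.mono
      (Finset.coe_subset.2 (Finset.filter_subset _ _)))).symm
  rw [h3, h2]
  have h4 : (Finset.Icc 1 #(grd n r)).filter (· ≤ m) = Finset.Icc 1 (min m #(grd n r)) := by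
    ext x
    simp only [Finset.mem_filter, Finset.mem_Icc]
    omega
  rw [h4, Nat.card_Icc]
  omega

lemma compress_eq_coe (n r : ℕ) (G : Set (Finset ℕ)) :
    compress n r G = ↑((grd n r).filter fun B => colexRank n r B ≤ G.ncard) := by
  ext B
  simp [compress, Finset.coe_filter, mem_grd]

lemma compress_ncard {G : Set (Finset ℕ)} (hG : G ⊆ uniformOn n r) :
    (compress n r G).ncard = G.ncard := by
  have hGc : G ⊆ ↑(grd n r) := by rwa [uniformOn_eq_coe] at hG
  have hle : G.ncard ≤ #(grd n r) := by
    rw [← Set.ncard_coe_finset]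
    exact Set.ncard_le_ncard hGc (Finset.finite_toSet _)
  rw [compress_eq_coe, Set.ncard_coe_finset, card_rank_le]
  omega

lemma compress_subset (n r : ℕ) (G : Set (Finset ℕ)) : compress n r G ⊆ uniformOn n r :=
  fun _ hB => hB.1

lemma compress_mono {G H : Set (Finset ℕ)} (h : G.ncard ≤ H.ncard) :
    compress n r G ⊆ compress n r H := fun _ hB => ⟨hB.1, hB.2.trans h⟩

lemma nonempty_of_mem_compress {G : Set (Finset ℕ)} {B : Finset ℕ}
    (hB : B ∈ compress n r G) : G.Nonempty := by
  have h1 : 1 ≤ colexRank n r B := one_le_colexRank (mem_grd.2 hB.1)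
  have h2 := hB.2
  exact Set.nonempty_of_ncard_ne_zero (by omega)

/-- The (1-dimensional) shadow of a set family. -/
def setShadow (G : Set (Finset ℕ)) : Set (Finset ℕ) := {B | ∃ A ∈ G, ∃ x ∈ A, A.erase x = B}

lemma setShadow_coe (𝒜 : Finset (Finset ℕ)) : setShadow ↑𝒜 = ↑(𝒜.shadow) := by
  ext B
  simp [setShadow, Finset.mem_shadow_iff]

lemma setShadow_mono {G H : Set (Finset ℕ)} (h : G ⊆ H) : setShadow G ⊆ setShadow H := by
  rintro B ⟨A, hA, x, hx, rfl⟩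
  exact ⟨A, h hA, x, hx, rfl⟩

lemma setShadow_subset {G : Set (Finset ℕ)} (hG : G ⊆ uniformOn n r) :
    setShadow G ⊆ ↑(grd n (r - 1)) := by
  rintro B ⟨A, hA, x, hx, rfl⟩
  have h := hG hA
  rw [Finset.mem_coe, mem_grd]
  exact ⟨(Finset.erase_subset _ _).trans h.1, by rw [Finset.card_erase_of_mem hx, h.2]⟩

/-! ### Transport to `Fin n` and Kruskal–Katona -/

def natf {n : ℕ} : Fin n → ℕ := fun i => (i : ℕ) + 1

lemma natf_strictMono : StrictMono (natf (n := n)) := fun a b h => by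
  simpa [natf] using h

lemma natf_inj : Function.Injective (natf (n := n)) := natf_strictMono.injective

def embN (n : ℕ) : Fin n ↪ ℕ := ⟨natf, natf_inj⟩

lemma image_natf_univ : (Finset.univ : Finset (Fin n)).image natf = Finset.Icc 1 n := by
  ext x
  simp only [Finset.mem_image, Finset.mem_univ, true_and, Finset.mem_Icc]
  constructor
  · rintro ⟨i, rfl⟩
    have := i.isLt
    simp only [natf]
    omega
  · rintro ⟨h1, h2⟩
    exact ⟨⟨x - 1, by omega⟩, by simp only [natf]; omega⟩

lemma coe_embN : ⇑(embN n) = (natf (n := n)) := rfl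

lemma image_pre {A : Finset ℕ} (hA : A ⊆ Finset.Icc 1 n) :
    (A.preimage (natf (n := n)) natf_inj.injOn).image natf = A := by
  classical
  rw [Finset.image_preimage]
  apply Finset.filter_true_of_mem
  intro x hx
  have h := hA hx
  rw [Finset.mem_Icc] at h
  exact ⟨⟨x - 1, by omega⟩, by simp only [natf]; omega⟩

lemma pre_image {s : Finset (Fin n)} : (s.image natf).preimage natf natf_inj.injOn = s := by
  have h : s.image natf = s.map (embN n) := by rw [Finset.map_eq_image, coe_embN]
  rw [h]
  exact Finset.preimage_map _ _

lemma image_natf_injective : Function.Injective (fun s : Finset (Fin n) => s.image natf) := by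
  intro s t h
  rw [← pre_image (n := n) (s := s), ← pre_image (n := n) (s := t)]
  simp only at h
  rw [h]

lemma image_erase' (s : Finset (Fin n)) (a : Fin n) :
    (s.erase a).image natf = (s.image natf).erase (natf a) := by
  have h1 : (s.erase a).image natf = (s.erase a).map (embN n) := by
    rw [Finset.map_eq_image, coe_embN]
  have h2 : s.image natf = s.map (embN n) := by rw [Finset.map_eq_image, coe_embN]
  rw [h1, h2, Finset.map_erase]
  rfl

lemma shadow_image (ℬ : Finset (Finset (Fin n))) :
    (ℬ.image fun s => s.image natf).shadow = ℬ.shadow.image fun s => s.image natf := by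
  ext t
  simp only [Finset.mem_shadow_iff, Finset.mem_image]
  constructor
  · rintro ⟨s', ⟨s, hs, rfl⟩, a, ha, rfl⟩
    obtain ⟨b, hb, rfl⟩ := Finset.mem_image.1 ha
    exact ⟨s.erase b, ⟨s, hs, b, hb, rfl⟩, image_erase' s b⟩
  · rintro ⟨u, ⟨s, hs, a, ha, rfl⟩, rfl⟩
    exact ⟨s.image natf, ⟨s, hs, rfl⟩, natf a, Finset.mem_image_of_mem _ ha,
      (image_erase' s a).symm⟩

set_option maxHeartbeats 1000000 in
lemma shadow_compress_le (n r : ℕ) {G : Set (Finset ℕ)} (hG : G ⊆ uniformOn n r) :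
    (setShadow (compress n r G)).ncard ≤ (setShadow G).ncard := by
  have hGc : G ⊆ ↑(grd n r) := by rwa [uniformOn_eq_coe] at hG
  have hfin : G.Finite := ((grd n r).finite_toSet).subset hGc
  set Gf := hfin.toFinset with hGfdef
  have hGcoe : G = ↑Gf := by simp [hGfdef]
  have hGfsub : Gf ⊆ grd n r := fun A hA => hGc (by rwa [← Set.Finite.mem_toFinset hfin])
  set m := #Gf with hm
  have hncard : G.ncard = m := by rw [hGcoe, Set.ncard_coe_finset]
  set Cf := (grd n r).filter fun B => colexRank n r B ≤ m with hCfdef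
  have hcomp : compress n r G = ↑Cf := by rw [compress_eq_coe, hncard]
  rw [hcomp, hGcoe, setShadow_coe, setShadow_coe, Set.ncard_coe_finset, Set.ncard_coe_finset]
  -- pull everything back to `Fin n`
  set pre : Finset ℕ → Finset (Fin n) := fun A => A.preimage (natf (n := n)) natf_inj.injOn
    with hpredef
  have key : ∀ A ∈ grd n r, (pre A).image natf = A := fun A hA =>
    image_pre (mem_grd'.1 hA).1
  have hCfsub : Cf ⊆ grd n r := Finset.filter_subset _ _
  have hpreinjC : Set.InjOn pre ↑Cf := by
    intro A hA B hB h
    rw [← key A (hCfsub hA), ← key B (hCfsub hB), h]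
  have hpreinjG : Set.InjOn pre ↑Gf := by
    intro A hA B hB h
    rw [← key A (hGfsub hA), ← key B (hGfsub hB), h]
  have hcardA : ∀ A ∈ grd n r, #(pre A) = r := by
    intro A hA
    have := key A hA
    have h1 : #((pre A).image natf) = #(pre A) := Finset.card_image_of_injective _ natf_inj
    rw [this] at h1
    rw [← h1, (mem_grd'.1 hA).2]
  have hsizedG : ((Gf.image pre : Finset (Finset (Fin n))) : Set (Finset (Fin n))).Sized r := by
    intro s hs
    obtain ⟨A, hA, rfl⟩ := Finset.mem_image.1 (by simpa using hs)
    exact hcardA A (hGfsub hA)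
  have hinit : Colex.IsInitSeg (Cf.image pre) r := by
    constructor
    · intro s hs
      obtain ⟨A, hA, rfl⟩ := Finset.mem_image.1 (by simpa using hs)
      exact hcardA A (hCfsub hA)
    · rintro s t hs ⟨hlt, hcard⟩
      obtain ⟨B, hB, rfl⟩ := Finset.mem_image.1 hs
      have hBgrd : B ∈ grd n r := hCfsub hB
      have hsB : (pre B).image natf = B := key B hBgrd
      have htA : t.image natf ∈ grd n r := by
        rw [mem_grd']
        constructor
        · rw [← image_natf_univ]
          exact Finset.image_subset_image (Finset.subset_univ t)
        · rw [Finset.card_image_of_injective _ natf_inj, hcard]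
      have hlt2 : toColex (t.image natf) < toColex ((pre B).image natf) :=
        (Finset.Colex.toColex_image_lt_toColex_image natf_strictMono).2 hlt
      rw [hsB] at hlt2
      have hrank : colexRank n r (t.image natf) ≤ colexRank n r B := colexRank_mono hlt2.le
      have htCf : t.image natf ∈ Cf :=
        Finset.mem_filter.2 ⟨htA, hrank.trans (Finset.mem_filter.1 hB).2⟩
      refine Finset.mem_image.2 ⟨t.image natf, htCf, ?_⟩
      exact pre_image
  have hcard𝒞 : #(Cf.image pre) ≤ #(Gf.image pre) := by
    rw [Finset.card_image_of_injOn hpreinjC, Finset.card_image_of_injOn hpreinjG]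
    rw [hCfdef, card_rank_le]
    omega
  have hKK := Finset.kruskal_katona hsizedG hcard𝒞 hinit
  -- transport shadows back
  have htransport : ∀ (X : Finset (Finset ℕ)), X ⊆ grd n r →
      #(X.shadow) = #(X.image pre).shadow := by
    intro X hX
    have hXeq : X = (X.image pre).image (fun s => s.image natf) := by
      ext A
      simp only [Finset.mem_image]
      constructor
      · intro hA
        exact ⟨pre A, ⟨A, hA, rfl⟩, key A (hX hA)⟩
      · rintro ⟨s, ⟨B, hB, rfl⟩, rfl⟩
        rw [key B (hX hB)]
        exact hB
    calc #X.shadow = #((X.image pre).image fun s => s.image natf).shadow := by rw [← hXeq]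
      _ = #((X.image pre).shadow.image fun s => s.image natf) := by
            rw [shadow_image (X.image pre)]
      _ = #(X.image pre).shadow := Finset.card_image_of_injective _ image_natf_injective
  have hinsteq : ∀ (i1 i2 : DecidableEq (Fin n)) (Y : Finset (Finset (Fin n))),
      @Finset.shadow _ i1 Y = @Finset.shadow _ i2 Y := fun i1 i2 Y => by
    rw [Subsingleton.elim i1 i2]
  have hKK' : #(Cf.image pre).shadow ≤ #(Gf.image pre).shadow := by
    rw [hinsteq _ (instDecidableEqFin n) (Cf.image pre),
      hinsteq _ (instDecidableEqFin n) (Gf.image pre)] at hKK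
    exact hKK
  rw [htransport Cf hCfsub, htransport Gf hGfsub]
  exact hKK'

/-! ### Sections of multi-dimensional families -/

/-- The section of a `(d+1)`-dimensional family in the last coordinate. -/
def sec {X : Type*} {d : ℕ} (F : Set (Fin (d + 1) → X)) (P : Fin d → X) : Set X :=
  {A | Fin.snoc P A ∈ F}

lemma mem_sec {X : Type*} {d : ℕ} {F : Set (Fin (d + 1) → X)} {P : Fin d → X} {A : X} :
    A ∈ sec F P ↔ Fin.snoc P A ∈ F := Iff.rfl

lemma sections_count {X : Type*} (d : ℕ) (F : Set (Fin (d + 1) → X)) (hfin : F.Finite)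
    (Ps : Finset (Fin d → X)) (h : ∀ T ∈ F, Fin.init T ∈ Ps) :
    F.ncard = ∑ P ∈ Ps, (sec F P).ncard := by
  classical
  rw [Set.ncard_eq_toFinset_card F hfin]
  rw [Finset.card_eq_sum_card_fiberwise
    (f := fun T : Fin (d + 1) → X => Fin.init T) (t := Ps)
    (fun T hT => h T (hfin.mem_toFinset.1 hT))]
  refine Finset.sum_congr rfl fun P _ => ?_
  have hinj : Function.Injective (Fin.snoc (α := fun _ : Fin (d + 1) => X) P) := by
    intro a b hab
    have := congrArg (fun g => g (Fin.last d)) hab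
    simpa using this
  have hs : ↑(hfin.toFinset.filter fun T => Fin.init T = P)
      = (Fin.snoc (α := fun _ : Fin (d + 1) => X) P) '' (sec F P) := by
    ext T
    simp only [Finset.coe_filter, Set.Finite.mem_toFinset, Set.mem_setOf_eq, Set.mem_image,
      mem_sec]
    constructor
    · rintro ⟨hT, rfl⟩
      exact ⟨T (Fin.last d), by rwa [Fin.snoc_init_self], Fin.snoc_init_self T⟩
    · rintro ⟨A, hA, rfl⟩
      exact ⟨hA, Fin.init_snoc _ _⟩
  calc #(hfin.toFinset.filter fun T => Fin.init T = P)
      = (↑(hfin.toFinset.filter fun T => Fin.init T = P) : Set (Fin (d + 1) → X)).ncard :=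
        (Set.ncard_coe_finset _).symm
    _ = ((Fin.snoc (α := fun _ : Fin (d + 1) => X) P) '' (sec F P)).ncard := by rw [hs]
    _ = (sec F P).ncard := Set.ncard_image_of_injective _ hinj

lemma sec_compressLast (n r d : ℕ) (F : Set (Fin (d + 1) → Finset ℕ))
    (P : Fin d → Finset ℕ) :
    sec (compressLast n r d F) P = compress n r (sec F P) := by
  ext A
  simp only [mem_sec, compressLast, Set.mem_setOf_eq, Fin.snoc_last, Fin.init_snoc]
  rfl

/-- The "erasure" relation between tuples. -/
def Rel {d : ℕ} (Q P : Fin d → Finset ℕ) : Prop := ∀ i, ∃ x ∈ Q i, (Q i).erase x = P i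

lemma mem_sec_shadow {d : ℕ} (G : Set (Fin (d + 1) → Finset ℕ)) (P : Fin d → Finset ℕ)
    (B : Finset ℕ) :
    Fin.snoc P B ∈ multiShadow (d + 1) G ↔
      ∃ Q, Rel Q P ∧ B ∈ setShadow (sec G Q) := by
  constructor
  · rintro ⟨S, hS, x, hx, hT⟩
    refine ⟨Fin.init S, ?_, S (Fin.last d), ?_, x (Fin.last d), hx _, ?_⟩
    · intro i
      refine ⟨x (Fin.castSucc i), hx _, ?_⟩
      have h := hT (Fin.castSucc i)
      rw [Fin.snoc_castSucc] at h
      exact h.symm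
    · rw [mem_sec, Fin.snoc_init_self]
      exact hS
    · have h := hT (Fin.last d)
      rw [Fin.snoc_last] at h
      exact h.symm
  · rintro ⟨Q, hQP, A, hA, y, hy, hB⟩
    choose x hx1 hx2 using hQP
    refine ⟨Fin.snoc Q A, hA, Fin.snoc x y, ?_, ?_⟩
    · intro i
      refine Fin.lastCases ?_ ?_ i
      · rw [Fin.snoc_last, Fin.snoc_last]
        exact hy
      · intro j
        rw [Fin.snoc_castSucc, Fin.snoc_castSucc]
        exact hx1 j
    · intro i
      refine Fin.lastCases ?_ ?_ i
      · rw [Fin.snoc_last, Fin.snoc_last, Fin.snoc_last]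
        exact hB.symm
      · intro j
        rw [Fin.snoc_castSucc, Fin.snoc_castSucc, Fin.snoc_castSucc]
        exact (hx2 j).symm

lemma sec_ineq (n r d : ℕ) (F : Set (Fin (d + 1) → Finset ℕ))
    (hF : ∀ S ∈ F, ∀ i, S i ∈ uniformOn n r) (P : Fin d → Finset ℕ) :
    (sec (multiShadow (d + 1) (compressLast n r d F)) P).ncard
      ≤ (sec (multiShadow (d + 1) F) P).ncard := by
  classical
  set L := sec (multiShadow (d + 1) (compressLast n r d F)) P with hLdef
  rcases L.eq_empty_or_nonempty with hL | ⟨B0, hB0⟩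
  · simp [hL]
  have hsecU : ∀ Q : Fin d → Finset ℕ, sec F Q ⊆ uniformOn n r := by
    intro Q A hA
    have := hF _ hA (Fin.last d)
    rwa [Fin.snoc_last] at this
  have hQgrd : ∀ Q : Fin d → Finset ℕ, (sec F Q).Nonempty →
      Q ∈ Fintype.piFinset (fun _ : Fin d => grd n r) := by
    rintro Q ⟨A, hA⟩
    rw [Fintype.mem_piFinset]
    intro i
    have := hF _ hA (Fin.castSucc i)
    rw [Fin.snoc_castSucc] at this
    exact mem_grd.2 this
  set QQ := (Fintype.piFinset fun _ : Fin d => grd n r).filter (fun Q => Rel Q P) with hQQdef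
  have hmemL : ∀ B ∈ L, ∃ Q ∈ QQ, B ∈ setShadow (compress n r (sec F Q)) := by
    intro B hB
    rw [hLdef, mem_sec, mem_sec_shadow] at hB
    obtain ⟨Q, hQP, hBQ⟩ := hB
    rw [sec_compressLast] at hBQ
    have hne : (sec F Q).Nonempty := by
      obtain ⟨A', hA', -⟩ := hBQ
      exact nonempty_of_mem_compress hA'
    exact ⟨Q, Finset.mem_filter.2 ⟨hQgrd Q hne, hQP⟩, hBQ⟩
  have hQQne : QQ.Nonempty := by
    obtain ⟨Q, hQ, _⟩ := hmemL B0 hB0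
    exact ⟨Q, hQ⟩
  obtain ⟨Q', hQ'mem, hQ'max⟩ :=
    Finset.exists_max_image QQ (fun Q => (sec F Q).ncard) hQQne
  have hclaim : L ⊆ setShadow (compress n r (sec F Q')) := by
    intro B hB
    obtain ⟨Q, hQ, hBQ⟩ := hmemL B hB
    exact setShadow_mono (compress_mono (hQ'max Q hQ)) hBQ
  have hrel' : Rel Q' P := (Finset.mem_filter.1 hQ'mem).2
  have hstep3 : setShadow (sec F Q') ⊆ sec (multiShadow (d + 1) F) P := by
    intro B hB
    rw [mem_sec, mem_sec_shadow]
    exact ⟨Q', hrel', hB⟩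
  have hfin2 : (setShadow (compress n r (sec F Q'))).Finite :=
    Set.Finite.subset ((grd n (r - 1)).finite_toSet) (setShadow_subset (compress_subset _ _ _))
  have hfin3 : (sec (multiShadow (d + 1) F) P).Finite := by
    apply Set.Finite.subset ((grd n (r - 1)).finite_toSet)
    intro B hB
    rw [mem_sec, mem_sec_shadow] at hB
    obtain ⟨Q, _, hBQ⟩ := hB
    exact setShadow_subset (hsecU Q) hBQ
  calc L.ncard ≤ (setShadow (compress n r (sec F Q'))).ncard :=
        Set.ncard_le_ncard hclaim hfin2
    _ ≤ (setShadow (sec F Q')).ncard := shadow_compress_le n r (hsecU Q')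
    _ ≤ _ := Set.ncard_le_ncard hstep3 hfin3

end KKAux

theorem stmt3 (n r d : ℕ) (hr : 1 ≤ r)
    (F : Set (Fin (d + 1) → Finset ℕ)) (hF : ∀ S ∈ F, ∀ i, S i ∈ uniformOn n r) :
    (compressLast n r d F).ncard = F.ncard ∧
      (multiShadow (d + 1) (compressLast n r d F)).ncard ≤ (multiShadow (d + 1) F).ncard := by
  classical
  open KKAux in
  have hF' : ∀ T ∈ compressLast n r d F, ∀ i, T i ∈ uniformOn n r := by
    intro T hT i
    have hlast : T (Fin.last d) ∈ compress n r (KKAux.sec F (Fin.init T)) := hT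
    refine Fin.lastCases ?_ ?_ i
    · exact KKAux.compress_subset _ _ _ hlast
    · intro j
      obtain ⟨A, hA⟩ := KKAux.nonempty_of_mem_compress hlast
      have h := hF _ hA (Fin.castSucc j)
      rwa [Fin.snoc_castSucc] at h
  have hcoordsShadow : ∀ (G : Set (Fin (d + 1) → Finset ℕ)),
      (∀ T ∈ G, ∀ i, T i ∈ uniformOn n r) →
      ∀ T ∈ multiShadow (d + 1) G, ∀ i, T i ∈ KKAux.grd n (r - 1) := by
    rintro G hG T ⟨S, hS, x, hx, hT⟩ i
    rw [hT i]
    have hSi := hG S hS i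
    rw [KKAux.mem_grd]
    exact ⟨(Finset.erase_subset _ _).trans hSi.1,
      by rw [Finset.card_erase_of_mem (hx i), hSi.2]⟩
  have hfinF : F.Finite := by
    apply Set.Finite.subset ((Fintype.piFinset fun _ : Fin (d + 1) => KKAux.grd n r).finite_toSet)
    intro T hT
    rw [Finset.mem_coe, Fintype.mem_piFinset]
    exact fun i => KKAux.mem_grd.2 (hF T hT i)
  have hfinF' : (compressLast n r d F).Finite := by
    apply Set.Finite.subset ((Fintype.piFinset fun _ : Fin (d + 1) => KKAux.grd n r).finite_toSet)
    intro T hT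
    rw [Finset.mem_coe, Fintype.mem_piFinset]
    exact fun i => KKAux.mem_grd.2 (hF' T hT i)
  have hfinS : (multiShadow (d + 1) F).Finite := by
    apply Set.Finite.subset
      ((Fintype.piFinset fun _ : Fin (d + 1) => KKAux.grd n (r - 1)).finite_toSet)
    intro T hT
    rw [Finset.mem_coe, Fintype.mem_piFinset]
    exact fun i => hcoordsShadow F hF T hT i
  have hfinS' : (multiShadow (d + 1) (compressLast n r d F)).Finite := by
    apply Set.Finite.subset
      ((Fintype.piFinset fun _ : Fin (d + 1) => KKAux.grd n (r - 1)).finite_toSet)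
    intro T hT
    rw [Finset.mem_coe, Fintype.mem_piFinset]
    exact fun i => hcoordsShadow _ hF' T hT i
  constructor
  · -- cardinality
    set Ps := Fintype.piFinset fun _ : Fin d => KKAux.grd n r with hPsdef
    have hinitF : ∀ T ∈ F, Fin.init T ∈ Ps := by
      intro T hT
      rw [Fintype.mem_piFinset]
      intro i
      exact KKAux.mem_grd.2 (hF T hT (Fin.castSucc i))
    have hinitF' : ∀ T ∈ compressLast n r d F, Fin.init T ∈ Ps := by
      intro T hT
      rw [Fintype.mem_piFinset]
      intro i
      exact KKAux.mem_grd.2 (hF' T hT (Fin.castSucc i))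
    rw [KKAux.sections_count d F hfinF Ps hinitF,
      KKAux.sections_count d _ hfinF' Ps hinitF']
    refine Finset.sum_congr rfl fun P _ => ?_
    rw [KKAux.sec_compressLast]
    apply KKAux.compress_ncard
    intro A hA
    have := hF _ hA (Fin.last d)
    rwa [Fin.snoc_last] at this
  · -- shadow
    set Ps := Fintype.piFinset fun _ : Fin d => KKAux.grd n (r - 1) with hPsdef
    have hinitS : ∀ T ∈ multiShadow (d + 1) F, Fin.init T ∈ Ps := by
      intro T hT
      rw [Fintype.mem_piFinset]
      intro i
      exact hcoordsShadow F hF T hT (Fin.castSucc i)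
    have hinitS' : ∀ T ∈ multiShadow (d + 1) (compressLast n r d F), Fin.init T ∈ Ps := by
      intro T hT
      rw [Fintype.mem_piFinset]
      intro i
      exact hcoordsShadow _ hF' T hT (Fin.castSucc i)
    rw [KKAux.sections_count d _ hfinS Ps hinitS,
      KKAux.sections_count d _ hfinS' Ps hinitS']
    exact Finset.sum_le_sum fun P _ => KKAux.sec_ineq n r d F hF P
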